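/- Let {C_α} be a family of closed convex subsets of a real Hilbert space H such that the affine hull of C = ⋂_α C_α is dense in H. Then any sequence x_{n+1} = P_{α(n)}x_n of consecutive metric projections onto sets of the family (in arbitrary order) converges weakly for every starting point x₀ ∈ H. -/

import Mathlib

open Filter

theorem stmt_17 {H : Type*} [NormedAddCommGroup H] [InnerProductSpace ℝ H]
    [CompleteSpace H]
    {Ω : Type*} (C : Ω → Set H)
    (hclosed : ∀ α, IsClosed (C α)) (hconv : ∀ α, Convex ℝ (C α))
    (hCne : (⋂ α, C α).Nonempty)
    (hdense : Dense ((affineSpan ℝ (⋂ α, C α) : AffineSubspace ℝ H) : Set H))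
    (P : Ω → H → H)
    (hPmem : ∀ α x, P α x ∈ C α)
    (hPnear : ∀ α x, ∀ y ∈ C α, ‖x - P α x‖ ≤ ‖x - y‖)
    (α : ℕ → Ω) (x : ℕ → H)
    (hrec : ∀ n, x (n + 1) = P (α n) (x n)) :
    ∃ w : H, ∀ y : H,
      Tendsto (fun n => (inner ℝ (x n) y : ℝ)) atTop (nhds (inner ℝ w y)) := by
  obtain ⟨a, haD⟩ := hCne
  set D : Set H := ⋂ α, C α with hDdef
  -- characterization of the projection
  have hchar : ∀ n, ∀ v ∈ C (α n), (inner ℝ (x n - x (n+1)) (v - x (n+1)) : ℝ) ≤ 0 := by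
    intro n v hv
    have hmem : x (n+1) ∈ C (α n) := by rw [hrec]; exact hPmem _ _
    haveI : Nonempty (C (α n)) := ⟨⟨x (n+1), hmem⟩⟩
    have heq : ‖x n - x (n+1)‖ = ⨅ w : C (α n), ‖x n - w‖ := by
      refine le_antisymm (le_ciInf fun w => by rw [hrec]; exact hPnear _ _ _ w.2) ?_
      exact ciInf_le ⟨0, fun _ ⟨w, hw⟩ => hw ▸ norm_nonneg _⟩ (⟨x (n+1), hmem⟩ : C (α n))
    exact (norm_eq_iInf_iff_real_inner_le_zero (hconv (α n)) hmem).1 heq v hv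
  -- the distance to any point of C (α n) does not increase at step n
  have hstep : ∀ n, ∀ v ∈ C (α n), ‖x (n+1) - v‖ ≤ ‖x n - v‖ := by
    intro n v hv
    have h1 := hchar n v hv
    have h2 : ‖x n - v‖^2 = ‖x n - x (n+1)‖^2
        + 2 * (inner ℝ (x n - x (n+1)) (x (n+1) - v) : ℝ) + ‖x (n+1) - v‖^2 := by
      have := norm_add_sq_real (x n - x (n+1)) (x (n+1) - v)
      rwa [sub_add_sub_cancel] at this
    have h3 : (inner ℝ (x n - x (n+1)) (x (n+1) - v) : ℝ)
        = - (inner ℝ (x n - x (n+1)) (v - x (n+1)) : ℝ) := by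
      rw [← inner_neg_right, neg_sub]
    nlinarith [norm_nonneg (x (n+1) - v), norm_nonneg (x n - v),
      sq_nonneg (‖x n - x (n+1)‖)]
  have hmemD : ∀ v ∈ D, ∀ β, v ∈ C β := fun v hv β => Set.mem_iInter.1 hv β
  have hanti : ∀ v ∈ D, Antitone fun n => ‖x n - v‖ := by
    intro v hv
    exact antitone_nat_of_succ_le fun n => hstep n v (hmemD v hv (α n))
  have hbound : ∀ n, ‖x n - a‖ ≤ ‖x 0 - a‖ := fun n => hanti a haD (Nat.zero_le n)
  -- distances converge
  have hnormconv : ∀ v ∈ D, ∃ l : ℝ, Tendsto (fun n => ‖x n - v‖) atTop (nhds l) := by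
    intro v hv
    exact ⟨_, tendsto_atTop_ciInf (hanti v hv)
      ⟨0, fun _ ⟨n, hn⟩ => hn ▸ norm_nonneg _⟩⟩
  -- inner ℝ products with v - a converge, for v ∈ D
  have hconv1 : ∀ v ∈ D, ∃ l : ℝ,
      Tendsto (fun n => (inner ℝ (x n - a) (v - a) : ℝ)) atTop (nhds l) := by
    intro v hv
    obtain ⟨l1, hl1⟩ := hnormconv a haD
    obtain ⟨l2, hl2⟩ := hnormconv v hv
    refine ⟨(l1^2 + ‖v - a‖^2 - l2^2) / 2, ?_⟩
    have hfun : ∀ n, (inner ℝ (x n - a) (v - a) : ℝ)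
        = (‖x n - a‖^2 + ‖v - a‖^2 - ‖x n - v‖^2) / 2 := by
      intro n
      have := norm_sub_sq_real (x n - a) (v - a)
      rw [sub_sub_sub_cancel_right] at this
      linarith
    simp only [hfun]
    exact (((hl1.pow 2).add tendsto_const_nhds).sub (hl2.pow 2)).div_const 2
  -- the set of good directions
  set L : Set H :=
    {y : H | ∃ l : ℝ, Tendsto (fun n => (inner ℝ (x n - a) y : ℝ)) atTop (nhds l)} with hLdef
  have hLspan : ∀ y ∈ vectorSpan ℝ D, y ∈ L := by
    intro y hy
    rw [vectorSpan_def] at hy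
    induction hy using Submodule.span_induction with
    | mem z hz =>
      obtain ⟨v, hv, w, hw, rfl⟩ := hz
      obtain ⟨l1, hl1⟩ := hconv1 v hv
      obtain ⟨l2, hl2⟩ := hconv1 w hw
      refine ⟨l1 - l2, ?_⟩
      have hfn : ∀ n, (inner ℝ (x n - a) (v -ᵥ w) : ℝ)
          = (inner ℝ (x n - a) (v - a) : ℝ) - (inner ℝ (x n - a) (w - a) : ℝ) := by
        intro n
        rw [← inner_sub_right, vsub_eq_sub, sub_sub_sub_cancel_right]
      simp only [hfn]
      exact hl1.sub hl2
    | zero => exact ⟨0, by simp only [inner_zero_right]; exact tendsto_const_nhds⟩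
    | add z w _ _ hz hw =>
      obtain ⟨l1, hl1⟩ := hz
      obtain ⟨l2, hl2⟩ := hw
      exact ⟨l1 + l2, by simpa only [inner_add_right] using hl1.add hl2⟩
    | smul c z _ hz =>
      obtain ⟨l1, hl1⟩ := hz
      exact ⟨c * l1, by simpa only [real_inner_smul_right] using hl1.const_mul c⟩
  -- L is closed
  have hLclosed : IsClosed L := by
    refine isClosed_of_closure_subset fun y hy => ?_
    have hcauchy : CauchySeq (fun n => (inner ℝ (x n - a) y : ℝ)) := by
      rw [Metric.cauchySeq_iff']
      intro ε hε
      set M : ℝ := ‖x 0 - a‖ + 1 with hM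
      have hMpos : 0 < M := by positivity
      obtain ⟨y', hy'L, hy'd⟩ := Metric.mem_closure_iff.1 hy (ε / 4 / M) (by positivity)
      obtain ⟨l', hl'⟩ := hy'L
      obtain ⟨N, hN⟩ := Metric.cauchySeq_iff'.1 hl'.cauchySeq (ε / 4) (by positivity)
      refine ⟨N, fun n hn => ?_⟩
      have hkey : ∀ k, |(inner ℝ (x k - a) y : ℝ) - (inner ℝ (x k - a) y' : ℝ)| ≤ ε / 4 := by
        intro k
        rw [← inner_sub_right]
        calc |(inner ℝ (x k - a) (y - y') : ℝ)| ≤ ‖x k - a‖ * ‖y - y'‖ :=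
              abs_real_inner_le_norm _ _
          _ ≤ M * (ε / 4 / M) := by
              refine mul_le_mul ?_ ?_ (norm_nonneg _) (le_of_lt hMpos)
              · calc ‖x k - a‖ ≤ ‖x 0 - a‖ := hbound k
                  _ ≤ M := by simp [hM]
              · rw [← dist_eq_norm]; exact le_of_lt hy'd
          _ = ε / 4 := by field_simp
      have h1 := hkey n
      have h2 := hkey N
      have h3 := hN n hn
      rw [Real.dist_eq] at h3 ⊢
      have hdecomp : (inner ℝ (x n - a) y : ℝ) - (inner ℝ (x N - a) y : ℝ)
          = ((inner ℝ (x n - a) y : ℝ) - (inner ℝ (x n - a) y' : ℝ))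
            + ((inner ℝ (x n - a) y' : ℝ) - (inner ℝ (x N - a) y' : ℝ))
            + ((inner ℝ (x N - a) y' : ℝ) - (inner ℝ (x N - a) y : ℝ)) := by ring
      rw [hdecomp]
      calc |_ + _ + ((inner ℝ (x N - a) y' : ℝ) - (inner ℝ (x N - a) y : ℝ))|
          ≤ |((inner ℝ (x n - a) y : ℝ) - (inner ℝ (x n - a) y' : ℝ))
            + ((inner ℝ (x n - a) y' : ℝ) - (inner ℝ (x N - a) y' : ℝ))|
            + |(inner ℝ (x N - a) y' : ℝ) - (inner ℝ (x N - a) y : ℝ)| := abs_add_le _ _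
        _ ≤ |(inner ℝ (x n - a) y : ℝ) - (inner ℝ (x n - a) y' : ℝ)|
            + |(inner ℝ (x n - a) y' : ℝ) - (inner ℝ (x N - a) y' : ℝ)|
            + |(inner ℝ (x N - a) y' : ℝ) - (inner ℝ (x N - a) y : ℝ)| := by
            gcongr
            exact abs_add_le _ _
        _ < ε := by
            rw [abs_sub_comm ((inner ℝ (x N - a) y' : ℝ))]
            linarith
    exact cauchySeq_tendsto_of_complete hcauchy
  -- every vector is a good direction
  have hLall : ∀ y : H, y ∈ L := by
    intro y
    have hsub : (fun p => p - a) '' ((affineSpan ℝ D : AffineSubspace ℝ H) : Set H) ⊆ L := by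
      rintro _ ⟨p, hp, rfl⟩
      have hmemv : p - a ∈ vectorSpan ℝ D := by
        have := AffineSubspace.vsub_mem_direction hp (mem_affineSpan ℝ haD)
        rwa [direction_affineSpan] at this
      exact hLspan _ hmemv
    have hclos : y ∈ closure ((fun p => p - a) ''
        ((affineSpan ℝ D : AffineSubspace ℝ H) : Set H)) := by
      have hz : y + a ∈ closure ((affineSpan ℝ D : AffineSubspace ℝ H) : Set H) := hdense _
      have himg : y ∈ (fun p => p - a) ''
          closure ((affineSpan ℝ D : AffineSubspace ℝ H) : Set H) :=
        ⟨y + a, hz, add_sub_cancel_right y a⟩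
      exact image_closure_subset_closure_image (continuous_id.sub continuous_const) himg
    have : y ∈ closure L := closure_mono hsub hclos
    rwa [hLclosed.closure_eq] at this
  choose l hl using hLall
  have ladd : ∀ y z, l (y + z) = l y + l z := fun y z =>
    tendsto_nhds_unique (hl (y + z))
      (by simpa only [inner_add_right] using (hl y).add (hl z))
  have lsmul : ∀ (c : ℝ) (y : H), l (c • y) = c * l y := fun c y =>
    tendsto_nhds_unique (hl (c • y))
      (by simpa only [real_inner_smul_right] using (hl y).const_mul c)
  have lbound : ∀ y, ‖l y‖ ≤ ‖x 0 - a‖ * ‖y‖ := by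
    intro y
    rw [Real.norm_eq_abs]
    refine le_of_tendsto (hl y).abs (Eventually.of_forall fun n => ?_)
    calc |(inner ℝ (x n - a) y : ℝ)| ≤ ‖x n - a‖ * ‖y‖ := abs_real_inner_le_norm _ _
      _ ≤ ‖x 0 - a‖ * ‖y‖ := mul_le_mul_of_nonneg_right (hbound n) (norm_nonneg y)
  let f : H →L[ℝ] ℝ := LinearMap.mkContinuous
    { toFun := l, map_add' := ladd, map_smul' := fun c y => by simpa using lsmul c y }
    (‖x 0 - a‖) lbound
  refine ⟨(InnerProductSpace.toDual ℝ H).symm f + a, fun y => ?_⟩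
  have h1 : (inner ℝ ((InnerProductSpace.toDual ℝ H).symm f + a) y : ℝ)
      = l y + (inner ℝ a y : ℝ) := by
    rw [inner_add_left, InnerProductSpace.toDual_symm_apply]
    rfl
  rw [h1]
  have h2 : ∀ n, (inner ℝ (x n) y : ℝ) = (inner ℝ (x n - a) y : ℝ) + (inner ℝ a y : ℝ) := by
    intro n
    rw [← inner_add_left, sub_add_cancel]
  simp only [h2]
  exact (hl y).add tendsto_const_nhds
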